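/- If X is a Hausdorff topological space with Lindelöf number L(X) ≤ κ and tightness t(X) ≤ κ (κ infinite), then every free sequence in X has length at most κ; i.e., F(X) ≤ L(X)·t(X). -/

import Mathlib

open Cardinal Set

universe u

/-- Every open cover (by opens of `X`) of the subset `Y` has a subcover of size `≤ κ`
(i.e. the Lindelöf number of the subspace `Y` is at most `κ`). -/
def LindelofLE {X : Type u} [TopologicalSpace X] (Y : Set X) (κ : Cardinal.{u}) : Prop :=
  ∀ U : Set (Set X), (∀ u ∈ U, IsOpen u) → Y ⊆ ⋃₀ U →
    ∃ V ⊆ U, #V ≤ κ ∧ Y ⊆ ⋃₀ V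

/-- The tightness of `X` is at most `κ`. -/
def TightnessLE (X : Type u) [TopologicalSpace X] (κ : Cardinal.{u}) : Prop :=
  ∀ (A : Set X) (x : X), x ∈ closure A → ∃ B ⊆ A, #B ≤ κ ∧ x ∈ closure B

/-- A family indexed by a linear order is a free sequence: for every cut point `b`,
the closure of the initial segment is disjoint from the closure of the tail. -/
def IsFreeSequence {X : Type u} [TopologicalSpace X] {α : Type u} [LinearOrder α]
    (f : α → X) : Prop :=
  ∀ b : α, Disjoint (closure (f '' {a | a < b})) (closure (f '' {a | b ≤ a}))

lemma freeSeq_comp {X : Type u} [TopologicalSpace X] {α γ : Type u}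
    [LinearOrder α] [LinearOrder γ] (f : α → X) (hf : IsFreeSequence f)
    (g : ((· < ·) : γ → γ → Prop) ↪r ((· < ·) : α → α → Prop)) :
    IsFreeSequence (f ∘ g) := by
  intro b
  refine Disjoint.mono ?_ ?_ (hf (g b)) <;> apply closure_mono
  · rintro _ ⟨a, ha, rfl⟩
    exact ⟨g a, g.map_rel_iff.2 ha, rfl⟩
  · rintro _ ⟨a, ha, rfl⟩
    refine ⟨g a, ?_, rfl⟩
    show g b ≤ g a
    rw [← not_lt]
    exact fun h => absurd (g.map_rel_iff.1 h) (not_lt.2 ha)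

lemma freeSeq_core {X : Type u} [TopologicalSpace X] {κ : Cardinal.{u}}
    (hκ : ℵ₀ ≤ κ) (hL : LindelofLE (Set.univ : Set X) κ) (ht : TightnessLE X κ)
    (f : (Order.succ κ).ord.ToType → X) (hf : IsFreeSequence f) : False := by
  have hcard : #((Order.succ κ).ord.ToType) = Order.succ κ := by
    rw [Cardinal.mk_toType, Cardinal.card_ord]
  have hlt : ∀ a b : (Order.succ κ).ord.ToType, a < b → f a ≠ f b := by
    intro a b hab heq
    have h1 : f a ∈ closure (f '' {x | x < b}) := subset_closure ⟨a, hab, rfl⟩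
    have h2 : f a ∈ closure (f '' {x | b ≤ x}) := heq ▸ subset_closure ⟨b, le_refl b, rfl⟩
    exact Set.disjoint_left.mp (hf b) h1 h2
  have hinj : Function.Injective f := by
    intro a b heq
    rcases lt_trichotomy a b with h | h | h
    · exact absurd heq (hlt a b h)
    · exact h
    · exact absurd heq.symm (hlt b a h)
  have hne : Nonempty ((Order.succ κ).ord.ToType) := by
    rw [← Cardinal.mk_ne_zero_iff, hcard]
    exact Cardinal.succ_ne_zero κ
  have hacc : ∃ p : X, ∀ u : Set X, IsOpen u → p ∈ u → κ < #(f ⁻¹' u) := by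
    by_contra h
    push_neg at h
    obtain ⟨V, hVU, hVκ, hVcov⟩ := hL {u | IsOpen u ∧ #(f ⁻¹' u) ≤ κ}
      (fun u hu => hu.1)
      (by
        intro x _
        obtain ⟨u, h1, h2, h3⟩ := h x
        exact ⟨u, ⟨h1, h3⟩, h2⟩)
    have hcov : (univ : Set ((Order.succ κ).ord.ToType)) ⊆ ⋃ v : V, f ⁻¹' (v : Set X) := by
      intro a _
      obtain ⟨u, huV, hau⟩ := hVcov (mem_univ (f a))
      exact mem_iUnion.2 ⟨⟨u, huV⟩, hau⟩
    have hVne : Nonempty V := by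
      obtain ⟨a⟩ := hne
      obtain ⟨u, huV, _⟩ := hVcov (mem_univ (f a))
      exact ⟨⟨u, huV⟩⟩
    have hle : #((Order.succ κ).ord.ToType) ≤ κ := by
      calc #((Order.succ κ).ord.ToType)
          = #(univ : Set ((Order.succ κ).ord.ToType)) := Cardinal.mk_univ.symm
        _ ≤ #(⋃ v : V, f ⁻¹' (v : Set X)) := Cardinal.mk_le_mk_of_subset hcov
        _ ≤ #V * ⨆ v : V, #(f ⁻¹' (v : Set X)) := Cardinal.mk_iUnion_le _
        _ ≤ κ * κ := mul_le_mul' hVκ (ciSup_le' fun v => (hVU v.2).2)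
        _ = κ := Cardinal.mul_eq_self hκ
    rw [hcard] at hle
    exact (Order.lt_succ κ).not_ge hle
  obtain ⟨p, hp⟩ := hacc
  have hpS : p ∈ closure (range f) := by
    rw [mem_closure_iff]
    intro u hu hpu
    have hlt' := hp u hu hpu
    rcases eq_empty_or_nonempty (f ⁻¹' u) with hemp | ⟨a, ha⟩
    · rw [hemp] at hlt'
      simp at hlt'
    · exact ⟨f a, ha, mem_range_self a⟩
  obtain ⟨B, hBsub, hBκ, hpB⟩ := ht (range f) p hpS
  have hBpre : #(f ⁻¹' B) ≤ κ := (Cardinal.mk_preimage_of_injective f B hinj).trans hBκ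
  have hbound : ∃ b : (Order.succ κ).ord.ToType, ∀ a ∈ f ⁻¹' B, a < b := by
    have hreg := Cardinal.isRegular_succ hκ
    haveI : IsWellOrder ((Order.succ κ).ord.ToType) (· < ·) := isWellOrder_lt
    exact not_isCofinal_iff.1 (fun hc => (Order.cof_le hc).not_gt
      (by
        rw [Ordinal.cof_toType]
        exact hBpre.trans_lt ((Order.lt_succ κ).trans_le hreg.2)))
  obtain ⟨b, hb⟩ := hbound
  have hpcl : p ∈ closure (f '' {a | a < b}) := by
    refine closure_mono ?_ hpB
    intro x hx
    obtain ⟨a, rfl⟩ := hBsub hx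
    exact ⟨a, hb a hx, rfl⟩
  have hnot : p ∉ closure (f '' {a | b ≤ a}) :=
    fun h => Set.disjoint_left.mp (hf b) hpcl h
  rw [mem_closure_iff] at hnot
  push_neg at hnot
  obtain ⟨u, hu, hpu, hdis⟩ := hnot
  have hsub : f ⁻¹' u ⊆ Iio b := by
    intro a hau
    by_contra hba
    rw [mem_Iio, not_lt] at hba
    exact (Set.not_nonempty_iff_eq_empty.2 hdis) ⟨f a, hau, ⟨a, hba, rfl⟩⟩
  have h1 : κ < #(Iio b) := (hp u hu hpu).trans_le (Cardinal.mk_le_mk_of_subset hsub)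
  have h2 : #(Iio b) < Order.succ κ := Cardinal.mk_Iio_ord_toType b
  exact absurd (Order.lt_succ_iff.mp h2) (not_le.2 h1)

/-- If `X` is Hausdorff with `L(X) ≤ κ` and `t(X) ≤ κ` (`κ` infinite), then every
free sequence in `X` has length at most `κ`; i.e. `F(X) ≤ L(X)·t(X)`. -/
theorem statement0 {X : Type u} [TopologicalSpace X] [T2Space X] {κ : Cardinal.{u}}
    (hκ : ℵ₀ ≤ κ) (hL : LindelofLE (Set.univ : Set X) κ) (ht : TightnessLE X κ) :
    ∀ (α : Type u) [LinearOrder α] [WellFoundedLT α] (f : α → X),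
      IsFreeSequence f → #α ≤ κ := by
  intro α _ _ f hf
  by_contra h
  push_neg at h
  have h1 : (Order.succ κ).ord ≤ Ordinal.type ((· < ·) : α → α → Prop) := by
    rw [Cardinal.ord_le, Ordinal.card_type]
    exact Order.succ_le_of_lt h
  rw [← Ordinal.type_toType (Order.succ κ).ord] at h1
  haveI : IsWellOrder ((Order.succ κ).ord.ToType) (· < ·) := isWellOrder_lt
  haveI : IsWellOrder α (· < ·) := isWellOrder_lt
  obtain ⟨g⟩ := Ordinal.type_le_iff'.mp h1
  exact freeSeq_core hκ hL ht (f ∘ g) (freeSeq_comp f hf g)
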